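/- Let k ≥ r ≥ 0, θ = r − 1/2, and let S = ((x_1,1),...,(x_m,1)) consist of m instances in [0,1]^d with all-positive labels. Then the logarithm of the (∞,ε)-proper covering number of the loss class {(x,y) ↦ [1/2 − y(⟨w,x⟩ − θ)]₊ : w ∈ ℝ_+^d, ‖w‖₁ ≤ k} with respect to S is at most 16·r·k·ln(d)·ln(3m)/ε². -/

import Mathlib

namespace Stmt16Aux

open Finset

/-- gradient vectors: `0` or `±(x i)` padded with a trailing `0`. -/
def vecC (d m : ℕ) (x : Fin m → Fin d → ℝ) : Option (Fin m × Bool) → Fin (d + 1) → ℝ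
  | none => fun _ => 0
  | some c => fun j => (if c.2 then (1 : ℝ) else -1) * (Fin.snoc (x c.1) (0 : ℝ) : Fin (d+1) → ℝ) j

lemma vecC_last (d m : ℕ) (x : Fin m → Fin d → ℝ) (c : Option (Fin m × Bool)) :
    vecC d m x c (Fin.last d) = 0 := by
  rcases c with _ | ⟨i, b⟩ <;> simp [vecC]

lemma vecC_abs_le (d m : ℕ) (x : Fin m → Fin d → ℝ) (hx : ∀ i j, x i j ∈ Set.Icc (0:ℝ) 1)
    (c : Option (Fin m × Bool)) (j : Fin (d+1)) : |vecC d m x c j| ≤ 1 := by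
  rcases c with _ | ⟨i, b⟩
  · simp [vecC]
  · simp only [vecC, abs_mul]
    have h1 : |if b = true then (1:ℝ) else -1| = 1 := by rcases b <;> norm_num
    rw [h1, one_mul]
    induction j using Fin.lastCases with
    | last => simp
    | cast j =>
      rw [Fin.snoc_castSucc, abs_of_nonneg (hx i j).1]
      exact (hx i j).2

/-- the normalized exponential-weights point, scaled by `k`. -/
noncomputable def ptf (d : ℕ) (k η : ℝ) (s : Fin (d+1) → ℝ) (j : Fin (d+1)) : ℝ :=
  k * (Real.exp (-(η * s j)) / ∑ j', Real.exp (-(η * s j')))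

lemma Zf_pos (d : ℕ) (η : ℝ) (s : Fin (d+1) → ℝ) : 0 < ∑ j', Real.exp (-(η * s j')) :=
  Finset.sum_pos (fun j _ => Real.exp_pos _) ⟨0, Finset.mem_univ _⟩

lemma ptf_nonneg (d : ℕ) (k η : ℝ) (hk : 0 ≤ k) (s : Fin (d+1) → ℝ) (j : Fin (d+1)) :
    0 ≤ ptf d k η s j :=
  mul_nonneg hk (div_nonneg (Real.exp_pos _).le (Zf_pos d η s).le)

lemma ptf_sum (d : ℕ) (k η : ℝ) (s : Fin (d+1) → ℝ) : ∑ j, ptf d k η s j = k := by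
  simp only [ptf]
  rw [← Finset.mul_sum, ← Finset.sum_div, div_self (Zf_pos d η s).ne', mul_one]

lemma exp_quad {z : ℝ} (h : |z| ≤ 1) : Real.exp z ≤ 1 + z + z ^ 2 := by
  have h2 := Real.exp_bound h (n := 2) (by norm_num)
  have h3 : ∑ i ∈ Finset.range 2, z ^ i / (i.factorial : ℝ) = 1 + z := by
    simp [Finset.sum_range_succ]
  rw [h3] at h2
  norm_num [Nat.factorial] at h2
  have h5 := (abs_le.1 h2).2
  nlinarith [sq_nonneg z]

lemma loss_eq (r S : ℝ) : max 0 (1/2 - (S - (r - 1/2))) = r - min S r := by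
  have h : (1:ℝ)/2 - (S - (r - 1/2)) = r - S := by ring
  rw [h]
  rcases le_total S r with h1 | h1
  · rw [min_eq_left h1, max_eq_right (by linarith)]
  · rw [min_eq_right h1, max_eq_left (by linarith), sub_self]

lemma step_lemma (d m : ℕ) (hm : 1 ≤ m) (η r : ℝ) (hη0 : 0 ≤ η) (hη1 : η ≤ 1) (hr : 0 ≤ r)
    (x : Fin m → Fin d → ℝ) (hx : ∀ i j, x i j ∈ Set.Icc (0:ℝ) 1)
    (u : Fin d → ℝ) (hu : ∀ j, 0 ≤ u j)
    (w : Fin (d+1) → ℝ) (hw : ∀ j, 0 ≤ w j) :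
    ∃ c : Option (Fin m × Bool), ∀ i : Fin m,
      |min (∑ j, w (Fin.castSucc j) * x i j) r - min (∑ j, u j * x i j) r| ≤
        (∑ j, vecC d m x c j * w j) - (∑ j, vecC d m x c (Fin.castSucc j) * u j)
          - η * (∑ j, w j * (vecC d m x c j) ^ 2) + η * r := by
  obtain ⟨i₀, -, hi₀⟩ := Finset.exists_max_image Finset.univ
    (fun i => |min (∑ j, w (Fin.castSucc j) * x i j) r - min (∑ j, u j * x i j) r|)
    ⟨⟨0, hm⟩, Finset.mem_univ _⟩
  set A := ∑ j, w (Fin.castSucc j) * x i₀ j with hA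
  set B := ∑ j, u j * x i₀ j with hB
  have hA0 : 0 ≤ A := Finset.sum_nonneg fun j _ => mul_nonneg (hw _) (hx i₀ j).1
  have hB0 : 0 ≤ B := Finset.sum_nonneg fun j _ => mul_nonneg (hu _) (hx i₀ j).1
  have hS1 : ∑ j, (Fin.snoc (x i₀) (0:ℝ) : Fin (d+1) → ℝ) j * w j = A := by
    rw [Fin.sum_univ_castSucc]
    simp only [Fin.snoc_castSucc, Fin.snoc_last, zero_mul, add_zero]
    exact Finset.sum_congr rfl fun j _ => mul_comm _ _
  have hS2 : ∑ j, (Fin.snoc (x i₀) (0:ℝ) : Fin (d+1) → ℝ) (Fin.castSucc j) * u j = B := by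
    simp only [Fin.snoc_castSucc]
    exact Finset.sum_congr rfl fun j _ => mul_comm _ _
  have hS3 : ∑ j, w j * ((Fin.snoc (x i₀) (0:ℝ) : Fin (d+1) → ℝ) j) ^ 2 ≤ A := by
    rw [Fin.sum_univ_castSucc]
    simp only [Fin.snoc_castSucc, Fin.snoc_last]
    rw [hA]
    have hterm : ∀ j ∈ (Finset.univ : Finset (Fin d)),
        w (Fin.castSucc j) * (x i₀ j) ^ 2 ≤ w (Fin.castSucc j) * x i₀ j := fun j _ => by
      nlinarith [mul_nonneg (hw (Fin.castSucc j))
        (mul_nonneg (hx i₀ j).1 (sub_nonneg.2 (hx i₀ j).2))]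
    calc (∑ j, w (Fin.castSucc j) * (x i₀ j) ^ 2) + w (Fin.last d) * 0 ^ 2
        = ∑ j, w (Fin.castSucc j) * (x i₀ j) ^ 2 := by ring
      _ ≤ ∑ j, w (Fin.castSucc j) * x i₀ j := Finset.sum_le_sum hterm
  have E1 : ∀ b : Bool, ∑ j, vecC d m x (some (i₀, b)) j * w j
      = (if b then (1:ℝ) else -1) * A := by
    intro b
    simp only [vecC]
    rw [← hS1, Finset.mul_sum]
    exact Finset.sum_congr rfl fun j _ => by ring
  have E2 : ∀ b : Bool, ∑ j, vecC d m x (some (i₀, b)) (Fin.castSucc j) * u j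
      = (if b then (1:ℝ) else -1) * B := by
    intro b
    simp only [vecC]
    rw [← hS2, Finset.mul_sum]
    exact Finset.sum_congr rfl fun j _ => by ring
  have E3 : ∀ b : Bool, ∑ j, w j * (vecC d m x (some (i₀, b)) j) ^ 2
      = ∑ j, w j * ((Fin.snoc (x i₀) (0:ℝ) : Fin (d+1) → ℝ) j) ^ 2 := by
    intro b
    simp only [vecC]
    refine Finset.sum_congr rfl fun j _ => ?_
    rcases b <;> simp <;> ring
  have key : ∀ i : Fin m,
      |min (∑ j, w (Fin.castSucc j) * x i j) r - min (∑ j, u j * x i j) r| ≤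
        |min A r - min B r| := fun i => hi₀ i (Finset.mem_univ i)
  have hS3η : η * (∑ j, w j * ((Fin.snoc (x i₀) (0:ℝ) : Fin (d+1) → ℝ) j) ^ 2) ≤ η * A :=
    mul_le_mul_of_nonneg_left hS3 hη0
  rcases lt_trichotomy (min A r) (min B r) with h | h | h
  · -- undershoot: pick -x i₀
    refine ⟨some (i₀, false), fun i => (key i).trans ?_⟩
    rw [E1, E2, E3, abs_of_neg (by linarith : min A r - min B r < 0)]
    have hAr : A < r := by
      rcases lt_or_ge A r with h1 | h1
      · exact h1
      · exfalso
        rw [min_eq_right h1] at h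
        exact absurd (min_le_right B r) (not_le.2 h)
    rw [min_eq_left hAr.le]
    have h2 : min B r ≤ B := min_le_left _ _
    have h3 : η * A ≤ η * r := mul_le_mul_of_nonneg_left hAr.le hη0
    simp only [Bool.false_eq_true, if_false]
    linarith
  · refine ⟨none, fun i => (key i).trans ?_⟩
    have e0 : ∀ j : Fin (d+1), vecC d m x none j = 0 := fun _ => rfl
    simp only [e0, zero_mul, mul_zero, Finset.sum_const_zero, h, sub_self, abs_zero,
      ne_eq, OfNat.ofNat_ne_zero, not_false_eq_true, zero_pow]
    have : (0:ℝ) ≤ η * r := mul_nonneg hη0 hr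
    linarith
  · -- overshoot: pick +x i₀
    refine ⟨some (i₀, true), fun i => (key i).trans ?_⟩
    rw [E1, E2, E3, abs_of_pos (by linarith : 0 < min A r - min B r)]
    have hBr : B < r := by
      rcases lt_or_ge B r with h1 | h1
      · exact h1
      · exfalso
        rw [min_eq_right h1] at h
        exact absurd (min_le_right A r) (not_le.2 h)
    rw [min_eq_left hBr.le]
    simp only [if_true]
    rcases le_or_gt A r with h1 | h1
    · rw [min_eq_left h1]
      have h3 : η * A ≤ η * r := mul_le_mul_of_nonneg_left h1 hη0
      linarith
    · rw [min_eq_right h1.le]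
      have h3 : η * (A - r) ≤ 1 * (A - r) := mul_le_mul_of_nonneg_right hη1 (by linarith)
      linarith

lemma hedge (d T : ℕ) (η k : ℝ) (hη0 : 0 < η) (hη1 : η ≤ 1) (hk : 0 ≤ k)
    (ℓ : ℕ → Fin (d+1) → ℝ) (hb : ∀ t j, |ℓ t j| ≤ 1)
    (S : ℕ → Fin (d+1) → ℝ) (hS0 : S 0 = fun _ => 0)
    (hSs : ∀ t, S (t+1) = fun j => S t j + ℓ t j)
    (q : Fin (d+1) → ℝ) (hq0 : ∀ j, 0 ≤ q j) (hq1 : ∑ j, q j = 1) :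
    ∑ t ∈ Finset.range T, ((∑ j, ℓ t j * ptf d k η (S t) j) - k * (∑ j, q j * ℓ t j)
      - η * (∑ j, ptf d k η (S t) j * (ℓ t j) ^ 2)) ≤ k * Real.log (d+1) / η := by
  set E : (Fin (d+1) → ℝ) → Fin (d+1) → ℝ := fun s j => Real.exp (-(η * s j)) with hE
  set Z : (Fin (d+1) → ℝ) → ℝ := fun s => ∑ j, E s j with hZdef
  have hZ : ∀ s, 0 < Z s := fun s => Zf_pos d η s
  set L : (Fin (d+1) → ℝ) → ℝ := fun s => Real.log (Z s) with hL
  set p : (Fin (d+1) → ℝ) → Fin (d+1) → ℝ := fun s j => E s j / Z s with hp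
  have hp0 : ∀ s j, 0 ≤ p s j := fun s j => div_nonneg (Real.exp_pos _).le (hZ s).le
  -- per-step potential drop
  have core1 : ∀ t, η * ((∑ j, ℓ t j * p (S t) j) - η * (∑ j, p (S t) j * (ℓ t j) ^ 2))
      ≤ L (S t) - L (S (t+1)) := by
    intro t
    set X := ∑ j, ℓ t j * p (S t) j with hX
    set Y := ∑ j, p (S t) j * (ℓ t j) ^ 2 with hY
    have hnew : Z (S (t+1)) = ∑ j, E (S t) j * Real.exp (-(η * ℓ t j)) := by
      refine Finset.sum_congr rfl fun j _ => ?_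
      rw [hSs t]
      simp only [hE]
      rw [← Real.exp_add]
      ring_nf
    have hbd : Z (S (t+1)) ≤ Z (S t) * (1 - η * X + η ^ 2 * Y) := by
      rw [hnew]
      have hterm : ∀ j ∈ (Finset.univ : Finset (Fin (d+1))),
          E (S t) j * Real.exp (-(η * ℓ t j))
            ≤ E (S t) j * (1 - η * ℓ t j + η ^ 2 * (ℓ t j) ^ 2) := by
        intro j _
        refine mul_le_mul_of_nonneg_left ?_ (Real.exp_pos _).le
        have habs : |-(η * ℓ t j)| ≤ 1 := by
          rw [abs_neg, abs_mul, abs_of_pos hη0]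
          calc η * |ℓ t j| ≤ 1 * 1 := mul_le_mul hη1 (hb t j) (abs_nonneg _) zero_le_one
            _ = 1 := by ring
        have := exp_quad habs
        calc Real.exp (-(η * ℓ t j)) ≤ 1 + -(η * ℓ t j) + (-(η * ℓ t j)) ^ 2 := this
          _ = 1 - η * ℓ t j + η ^ 2 * (ℓ t j) ^ 2 := by ring
      calc ∑ j, E (S t) j * Real.exp (-(η * ℓ t j))
          ≤ ∑ j, E (S t) j * (1 - η * ℓ t j + η ^ 2 * (ℓ t j) ^ 2) := Finset.sum_le_sum hterm
        _ = Z (S t) * (1 - η * X + η ^ 2 * Y) := by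
            have hEp : ∀ j, E (S t) j = p (S t) j * Z (S t) := fun j => by
              rw [hp]
              exact (div_mul_cancel₀ _ (hZ (S t)).ne').symm
            have hEl : ∑ j, E (S t) j * ℓ t j = Z (S t) * X := by
              rw [hX, Finset.mul_sum]
              exact Finset.sum_congr rfl fun j _ => by rw [hEp j]; ring
            have hEl2 : ∑ j, E (S t) j * (ℓ t j) ^ 2 = Z (S t) * Y := by
              rw [hY, Finset.mul_sum]
              exact Finset.sum_congr rfl fun j _ => by rw [hEp j]; ring
            calc ∑ j, E (S t) j * (1 - η * ℓ t j + η ^ 2 * (ℓ t j) ^ 2)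
                = ∑ j, (E (S t) j - η * (E (S t) j * ℓ t j)
                    + η ^ 2 * (E (S t) j * (ℓ t j) ^ 2)) :=
                  Finset.sum_congr rfl fun j _ => by ring
              _ = Z (S t) - η * (∑ j, E (S t) j * ℓ t j)
                    + η ^ 2 * (∑ j, E (S t) j * (ℓ t j) ^ 2) := by
                  rw [Finset.sum_add_distrib, Finset.sum_sub_distrib,
                    ← Finset.mul_sum, ← Finset.mul_sum]
              _ = Z (S t) * (1 - η * X + η ^ 2 * Y) := by rw [hEl, hEl2]; ring
    have hc : 0 < 1 - η * X + η ^ 2 * Y := by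
      by_contra hcon
      push_neg at hcon
      have : Z (S t) * (1 - η * X + η ^ 2 * Y) ≤ 0 :=
        mul_nonpos_of_nonneg_of_nonpos (hZ _).le hcon
      linarith [hZ (S (t+1))]
    have hlog : L (S (t+1)) ≤ L (S t) + (- (η * X) + η ^ 2 * Y) := by
      calc L (S (t+1)) = Real.log (Z (S (t+1))) := rfl
        _ ≤ Real.log (Z (S t) * (1 - η * X + η ^ 2 * Y)) :=
            Real.log_le_log (hZ _) hbd
        _ = Real.log (Z (S t)) + Real.log (1 - η * X + η ^ 2 * Y) := by
            rw [Real.log_mul (hZ _).ne' hc.ne']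
        _ ≤ Real.log (Z (S t)) + (1 - η * X + η ^ 2 * Y - 1) :=
            by linarith [Real.log_le_sub_one_of_pos hc]
        _ = L (S t) + (- (η * X) + η ^ 2 * Y) := by ring
    nlinarith [hlog]
  -- comparator bound
  have hSsum : ∀ n j, S n j = ∑ t ∈ Finset.range n, ℓ t j := by
    intro n
    induction n with
    | zero => intro j; rw [hS0]; simp
    | succ n ih =>
      intro j
      rw [hSs n]
      simp only
      rw [ih j, Finset.sum_range_succ]
  have core2 : -(η * ∑ t ∈ Finset.range T, (∑ j, q j * ℓ t j)) ≤ L (S T) := by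
    have jensen : ∑ j, q j • Real.log (E (S T) j)
        ≤ Real.log (∑ j, q j • E (S T) j) := by
      refine ConcaveOn.le_map_sum (strictConcaveOn_log_Ioi.concaveOn) (fun j _ => hq0 j) hq1
        (fun j _ => ?_)
      exact Real.exp_pos _
    have hqle : ∀ j, q j ≤ 1 := by
      intro j
      rw [← hq1]
      exact Finset.single_le_sum (fun j _ => hq0 j) (Finset.mem_univ j)
    have hpos : 0 < ∑ j, q j • E (S T) j := by
      obtain ⟨j0, hj0⟩ : ∃ j, 0 < q j := by
        by_contra hcon
        push_neg at hcon
        have : ∑ j, q j ≤ 0 := Finset.sum_nonpos fun j _ => hcon j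
        linarith
      have h1 : q j0 • E (S T) j0 ≤ ∑ j, q j • E (S T) j :=
        Finset.single_le_sum (f := fun j => q j • E (S T) j)
          (fun j _ => smul_nonneg (hq0 j) (Real.exp_pos _).le) (Finset.mem_univ j0)
      have h2 : 0 < q j0 • E (S T) j0 := smul_pos hj0 (Real.exp_pos _)
      linarith
    have hle : ∑ j, q j • E (S T) j ≤ Z (S T) := by
      refine Finset.sum_le_sum fun j _ => ?_
      rw [smul_eq_mul]
      calc q j * E (S T) j ≤ 1 * E (S T) j :=
        mul_le_mul_of_nonneg_right (hqle j) (Real.exp_pos _).le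
        _ = E (S T) j := one_mul _
    have hfin : ∑ j, q j • Real.log (E (S T) j) ≤ L (S T) :=
      jensen.trans (Real.log_le_log hpos hle)
    have hcompute : ∑ j, q j • Real.log (E (S T) j)
        = -(η * ∑ t ∈ Finset.range T, (∑ j, q j * ℓ t j)) := by
      have : ∀ j, Real.log (E (S T) j) = -(η * S T j) := fun j => by
        simp only [hE]
        exact Real.log_exp _
      calc ∑ j, q j • Real.log (E (S T) j) = ∑ j, q j * (-(η * S T j)) := by
            refine Finset.sum_congr rfl fun j _ => ?_
            rw [smul_eq_mul, this j]
        _ = -(η * ∑ j, q j * S T j) := by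
            rw [Finset.mul_sum, ← Finset.sum_neg_distrib]
            exact Finset.sum_congr rfl fun j _ => by ring
        _ = -(η * ∑ t ∈ Finset.range T, (∑ j, q j * ℓ t j)) := by
            have hsw : ∑ j, q j * S T j = ∑ t ∈ Finset.range T, ∑ j, q j * ℓ t j := by
              calc ∑ j, q j * S T j = ∑ j, ∑ t ∈ Finset.range T, q j * ℓ t j :=
                    Finset.sum_congr rfl fun j _ => by rw [hSsum T j, Finset.mul_sum]
                _ = ∑ t ∈ Finset.range T, ∑ j, q j * ℓ t j := Finset.sum_comm
            rw [hsw]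
    rw [← hcompute]
    exact hfin
  -- telescoping and combination
  have tele : ∑ t ∈ Finset.range T, (L (S t) - L (S (t+1))) = L (S 0) - L (S T) :=
    Finset.sum_range_sub' (fun t => L (S t)) T
  have hL0 : L (S 0) = Real.log (d+1) := by
    have hZ0 : Z (S 0) = (d:ℝ) + 1 := by
      rw [hZdef, hS0]
      simp only [hE, mul_zero, neg_zero, Real.exp_zero]
      rw [Finset.sum_const, Finset.card_univ, Fintype.card_fin]
      push_cast
      ring
    have hr : L (S 0) = Real.log (Z (S 0)) := rfl
    rw [hr, hZ0]
  have s1 : ∑ t ∈ Finset.range T,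
      (η * ((∑ j, ℓ t j * p (S t) j) - η * (∑ j, p (S t) j * (ℓ t j) ^ 2)))
      ≤ L (S 0) - L (S T) := by
    rw [← tele]
    exact Finset.sum_le_sum fun t _ => core1 t
  set BIG := ∑ t ∈ Finset.range T, ((∑ j, ℓ t j * p (S t) j) - (∑ j, q j * ℓ t j)
      - η * (∑ j, p (S t) j * (ℓ t j) ^ 2)) with hBIG
  have e : η * BIG = (∑ t ∈ Finset.range T,
      (η * ((∑ j, ℓ t j * p (S t) j) - η * (∑ j, p (S t) j * (ℓ t j) ^ 2))))
      - η * ∑ t ∈ Finset.range T, (∑ j, q j * ℓ t j) := by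
    rw [hBIG, Finset.mul_sum, Finset.mul_sum, ← Finset.sum_sub_distrib]
    exact Finset.sum_congr rfl fun t _ => by ring
  have hmain : η * BIG ≤ Real.log (d+1) := by
    rw [e]
    linarith [s1, core2, hL0]
  have hptf : ∀ s j, ptf d k η s j = k * p s j := fun s j => rfl
  have egoal : ∑ t ∈ Finset.range T, ((∑ j, ℓ t j * ptf d k η (S t) j)
      - k * (∑ j, q j * ℓ t j) - η * (∑ j, ptf d k η (S t) j * (ℓ t j) ^ 2))
      = k * BIG := by
    rw [hBIG, Finset.mul_sum]
    refine Finset.sum_congr rfl fun t _ => ?_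
    have a1 : ∑ j, ℓ t j * ptf d k η (S t) j = k * (∑ j, ℓ t j * p (S t) j) := by
      rw [Finset.mul_sum]
      exact Finset.sum_congr rfl fun j _ => by rw [hptf]; ring
    have a2 : ∑ j, ptf d k η (S t) j * (ℓ t j) ^ 2
        = k * (∑ j, p (S t) j * (ℓ t j) ^ 2) := by
      rw [Finset.mul_sum]
      exact Finset.sum_congr rfl fun j _ => by rw [hptf]; ring
    rw [a1, a2]
    ring
  rw [egoal]
  have hBIGle : BIG ≤ Real.log (d+1) / η := by
    rw [le_div_iff₀ hη0]
    calc BIG * η = η * BIG := mul_comm _ _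
      _ ≤ Real.log (d+1) := hmain
  calc k * BIG ≤ k * (Real.log (d+1) / η) := mul_le_mul_of_nonneg_left hBIGle hk
    _ = k * Real.log (d+1) / η := by ring


end Stmt16Aux

set_option maxHeartbeats 1000000 in
open Finset in
/-- Covering number bound for the Winnow loss class on all-positive samples: for
`k ≥ r ≥ 0`, `θ = r − 1/2`, and instances `x_1,…,x_m ∈ [0,1]^d` with label `+1`, for every
`ε > 0` there is a proper `(∞,ε)`-cover `V` of `{w ≥ 0 : ‖w‖₁ ≤ k}` under the loss
`w ↦ [1/2 − (⟨w,x_i⟩ − θ)]₊` with `ln |V| ≤ 16·r·k·ln(d)·ln(3m)/ε²`. -/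
theorem stmt16 (d m : ℕ) (hd : 1 < d) (hm : 1 ≤ m) (k r : ℝ) (hr : 0 ≤ r) (hrk : r ≤ k)
    (x : Fin m → Fin d → ℝ) (hx : ∀ i j, x i j ∈ Set.Icc (0 : ℝ) 1)
    (ε : ℝ) (hε : 0 < ε) :
    ∃ V : Finset (Fin d → ℝ),
      (∀ v ∈ V, (∀ j, 0 ≤ v j) ∧ (∑ j, |v j|) ≤ k) ∧
      (∀ w : Fin d → ℝ, (∀ j, 0 ≤ w j) → (∑ j, |w j|) ≤ k →
        ∃ v ∈ V, ∀ i,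
          |max 0 (1 / 2 - ((∑ j, w j * x i j) - (r - 1 / 2))) -
            max 0 (1 / 2 - ((∑ j, v j * x i j) - (r - 1 / 2)))| ≤ ε) ∧
      Real.log V.card ≤ 16 * r * k * Real.log d * Real.log (3 * m) / ε ^ 2 := by
  have hk0' : (0:ℝ) ≤ k := hr.trans hrk
  have hlogd_nn : (0:ℝ) ≤ Real.log d :=
    Real.log_nonneg (by exact_mod_cast hd.le)
  have h3m1 : (1:ℝ) ≤ 3 * m := by
    have : (1:ℝ) ≤ (m:ℝ) := by exact_mod_cast hm
    linarith
  have hlog3m_nn : (0:ℝ) ≤ Real.log (3 * m) := Real.log_nonneg h3m1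
  have hRHS_nn : (0:ℝ) ≤ 16 * r * k * Real.log d * Real.log (3 * m) / ε ^ 2 :=
    div_nonneg
      (mul_nonneg (mul_nonneg (mul_nonneg (by linarith) hk0') hlogd_nn) hlog3m_nn)
      (sq_nonneg ε)
  rcases le_or_gt r ε with hcase | hcase
  · -- trivial case: the single point 0 is an ε-cover
    refine ⟨{fun _ => 0}, ?_, ?_, ?_⟩
    · intro v hv
      rw [Finset.mem_singleton] at hv
      subst hv
      exact ⟨fun j => le_refl 0, by simpa using hk0'⟩
    · intro w hw0 hwk
      refine ⟨fun _ => 0, Finset.mem_singleton_self _, fun i => ?_⟩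
      have hSw : (0:ℝ) ≤ ∑ j, w j * x i j :=
        Finset.sum_nonneg fun j _ => mul_nonneg (hw0 j) (hx i j).1
      rw [Stmt16Aux.loss_eq, Stmt16Aux.loss_eq]
      have h0 : ∑ j, (fun _ : Fin d => (0:ℝ)) j * x i j = 0 := by simp
      rw [h0, min_eq_left hr]
      have h5 : 0 ≤ min (∑ j, w j * x i j) r := le_min hSw hr
      have h6 : min (∑ j, w j * x i j) r ≤ r := min_le_right _ _
      rw [show (r - min (∑ j, w j * x i j) r) - (r - 0)
          = -(min (∑ j, w j * x i j) r) by ring, abs_neg, abs_of_nonneg h5]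
      linarith
    · rw [Finset.card_singleton]
      simp only [Nat.cast_one, Real.log_one]
      exact hRHS_nn
  · -- main case: ε < r ≤ k
    have hr0 : (0:ℝ) < r := hε.trans hcase
    have hk0 : (0:ℝ) < k := lt_of_lt_of_le hr0 hrk
    set η := ε / (2 * r) with hηdef
    have hη0 : 0 < η := by positivity
    have hη1 : η ≤ 1 := by
      rw [hηdef, div_le_one (by positivity)]
      linarith
    have h2d : (2:ℝ) ≤ (d:ℝ) := by exact_mod_cast hd
    have hlogd : Real.log 2 ≤ Real.log d := Real.log_le_log two_pos h2d
    have hlog2 : (0.6931:ℝ) < Real.log 2 := by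
      have := Real.log_two_gt_d9
      linarith
    have hlogd0 : (0:ℝ) < Real.log d := by linarith
    set X := 16 * r * k * Real.log d / ε ^ 2 with hXdef
    have hε2 : (0:ℝ) < ε ^ 2 := by positivity
    have hX11 : (11:ℝ) < X := by
      have h1 : ε ^ 2 < r * k := by nlinarith
      have h2 : (1:ℝ) ≤ r * k / ε ^ 2 := by
        rw [le_div_iff₀ hε2]
        linarith
      have h3 : X = 16 * Real.log d * (r * k / ε ^ 2) := by
        rw [hXdef]; field_simp
      have h4 : 16 * Real.log d * 1 ≤ 16 * Real.log d * (r * k / ε ^ 2) := by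
        apply mul_le_mul_of_nonneg_left h2
        linarith
      rw [h3]
      nlinarith
    set T := ⌊X⌋₊ with hTdef
    have hTX : (T:ℝ) ≤ X := Nat.floor_le (by linarith)
    have hXT : X - 1 < (T:ℝ) := Nat.sub_one_lt_floor X
    have hTpos : 0 < T := by
      by_contra hcon
      push_neg at hcon
      interval_cases T
      · simp only [Nat.cast_zero] at hXT
        linarith
    have hlogd1 : Real.log ((d:ℝ) + 1) ≤ 2 * Real.log d := by
      have h1 : ((d:ℝ) + 1) ≤ (d:ℝ) ^ 2 := by nlinarith
      calc Real.log ((d:ℝ) + 1) ≤ Real.log ((d:ℝ) ^ 2) :=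
            Real.log_le_log (by positivity) h1
        _ = 2 * Real.log d := by
            rw [← Real.rpow_natCast (d:ℝ) 2, Real.log_rpow (by positivity)]
            norm_num
    have hkey : k * Real.log ((d:ℝ) + 1) / η ≤ T * (ε / 2) := by
      have e1 : k * Real.log ((d:ℝ) + 1) / η = 2 * r * k * Real.log ((d:ℝ) + 1) / ε := by
        rw [hηdef]
        field_simp
      have h2 : 2 * r * k * Real.log ((d:ℝ) + 1) / ε ≤ 4 * r * k * Real.log d / ε := by
        apply div_le_div_of_nonneg_right ?_ hε.le
        have hrk0 : (0:ℝ) ≤ r * k := by positivity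
        have := mul_le_mul_of_nonneg_left hlogd1 hrk0
        nlinarith
      have h3 : 4 * r * k * Real.log d / ε = X * ε / 4 := by
        rw [hXdef]
        field_simp
        ring
      have h4 : X ≤ 2 * T := by
        have : X / 2 < X - 1 := by linarith
        linarith
      rw [e1]
      calc 2 * r * k * Real.log ((d:ℝ) + 1) / ε ≤ 4 * r * k * Real.log d / ε := h2
        _ = X * ε / 4 := h3
        _ ≤ (2 * (T:ℝ)) * ε / 4 :=
            div_le_div_of_nonneg_right
              (mul_le_mul_of_nonneg_right h4 hε.le) (by norm_num)
        _ = T * (ε / 2) := by ring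
    -- the cover
    set F : (n : ℕ) → (Fin n → Option (Fin m × Bool)) → (Fin d → ℝ) :=
      fun n f => fun j => Stmt16Aux.ptf d k η
        (fun j' => ∑ i, Stmt16Aux.vecC d m x (f i) j') (Fin.castSucc j) with hF
    set V : Finset (Fin d → ℝ) :=
      Finset.biUnion (Finset.range T) (fun n => Finset.image (F n) Finset.univ) with hV
    refine ⟨V, ?_, ?_, ?_⟩
    · -- elements of V are feasible
      intro v hv
      rw [hV, Finset.mem_biUnion] at hv
      obtain ⟨n, hn, hv⟩ := hv
      rw [Finset.mem_image] at hv
      obtain ⟨f, -, rfl⟩ := hv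
      constructor
      · intro j
        exact Stmt16Aux.ptf_nonneg d k η hk0.le _ _
      · set s := fun j' => ∑ i, Stmt16Aux.vecC d m x (f i) j' with hs
        calc ∑ j, |F n f j| = ∑ j : Fin d, Stmt16Aux.ptf d k η s (Fin.castSucc j) :=
              Finset.sum_congr rfl fun j _ =>
                abs_of_nonneg (Stmt16Aux.ptf_nonneg d k η hk0.le _ _)
          _ ≤ ∑ j : Fin (d+1), Stmt16Aux.ptf d k η s j := by
              rw [Fin.sum_univ_castSucc]
              exact le_add_of_nonneg_right (Stmt16Aux.ptf_nonneg d k η hk0.le _ _)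
          _ = k := Stmt16Aux.ptf_sum d k η s
    · -- covering property
      intro w hw0 hwk
      have husum : ∑ j, w j ≤ k := by
        calc ∑ j, w j = ∑ j, |w j| :=
              Finset.sum_congr rfl fun j _ => (abs_of_nonneg (hw0 j)).symm
          _ ≤ k := hwk
      have hstep := fun s : Fin (d+1) → ℝ =>
        Stmt16Aux.step_lemma d m hm η r hη0.le hη1 hr x hx w hw0
          (Stmt16Aux.ptf d k η s) (fun j => Stmt16Aux.ptf_nonneg d k η hk0.le s j)
      choose good hgood using hstep
      set cum : ℕ → Fin (d+1) → ℝ := fun n => Nat.rec (motive := fun _ => Fin (d+1) → ℝ)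
        (fun _ => (0:ℝ)) (fun _ s => fun j => s j + Stmt16Aux.vecC d m x (good s) j) n
        with hcum
      set σ : ℕ → Option (Fin m × Bool) := fun n => good (cum n) with hσ
      have hc0 : cum 0 = fun _ => 0 := rfl
      have hcs : ∀ n, cum (n+1) = fun j => cum n j + Stmt16Aux.vecC d m x (σ n) j :=
        fun n => rfl
      set q : Fin (d+1) → ℝ :=
        (Fin.snoc (fun j => w j / k) (1 - (∑ j, w j) / k) : Fin (d+1) → ℝ) with hq
      have hq0 : ∀ j, 0 ≤ q j := by
        intro j
        induction j using Fin.lastCases with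
        | last =>
          rw [hq]
          simp only [Fin.snoc_last]
          rw [sub_nonneg, div_le_one hk0]
          exact husum
        | cast j =>
          rw [hq]
          simp only [Fin.snoc_castSucc]
          exact div_nonneg (hw0 j) hk0.le
      have hq1 : ∑ j, q j = 1 := by
        rw [hq, Fin.sum_univ_castSucc]
        simp only [Fin.snoc_castSucc, Fin.snoc_last]
        rw [← Finset.sum_div]
        ring
      have Hhedge := Stmt16Aux.hedge d T η k hη0 hη1 hk0.le
        (fun t => Stmt16Aux.vecC d m x (σ t))
        (fun t j => Stmt16Aux.vecC_abs_le d m x hx _ j)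
        cum hc0 hcs q hq0 hq1
      have hmid : ∀ c, k * (∑ j, q j * Stmt16Aux.vecC d m x c j)
          = ∑ j : Fin d, Stmt16Aux.vecC d m x c (Fin.castSucc j) * w j := by
        intro c
        calc k * (∑ j, q j * Stmt16Aux.vecC d m x c j)
            = k * (∑ j : Fin d, (w j / k) * Stmt16Aux.vecC d m x c (Fin.castSucc j)) := by
              rw [Fin.sum_univ_castSucc]
              simp only [hq, Fin.snoc_castSucc, Fin.snoc_last, Stmt16Aux.vecC_last,
                mul_zero, add_zero]
          _ = ∑ j : Fin d, Stmt16Aux.vecC d m x c (Fin.castSucc j) * w j := by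
              rw [Finset.mul_sum]
              refine Finset.sum_congr rfl fun j _ => ?_
              field_simp
      set Bnd : ℕ → ℝ := fun t =>
        (∑ j, Stmt16Aux.vecC d m x (σ t) j * Stmt16Aux.ptf d k η (cum t) j)
        - (∑ j : Fin d, Stmt16Aux.vecC d m x (σ t) (Fin.castSucc j) * w j)
        - η * (∑ j, Stmt16Aux.ptf d k η (cum t) j * (Stmt16Aux.vecC d m x (σ t) j) ^ 2)
        + η * r with hBnd
      have hB : ∀ t (i : Fin m),
          |min (∑ j, Stmt16Aux.ptf d k η (cum t) (Fin.castSucc j) * x i j) r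
            - min (∑ j, w j * x i j) r| ≤ Bnd t := by
        intro t i
        exact hgood (cum t) i
      have hsum2 : ∑ t ∈ Finset.range T, Bnd t
          ≤ k * Real.log ((d:ℝ)+1) / η + T * (η * r) := by
        have e : ∑ t ∈ Finset.range T, (Bnd t - η * r)
            = ∑ t ∈ Finset.range T,
              ((∑ j, Stmt16Aux.vecC d m x (σ t) j * Stmt16Aux.ptf d k η (cum t) j)
              - k * (∑ j, q j * Stmt16Aux.vecC d m x (σ t) j)
              - η * (∑ j, Stmt16Aux.ptf d k η (cum t) j
                  * (Stmt16Aux.vecC d m x (σ t) j) ^ 2)) := by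
          refine Finset.sum_congr rfl fun t _ => ?_
          rw [hBnd, hmid (σ t)]
          ring
        have e2 : ∑ t ∈ Finset.range T, (Bnd t - η * r)
            = (∑ t ∈ Finset.range T, Bnd t) - T * (η * r) := by
          rw [Finset.sum_sub_distrib, Finset.sum_const, Finset.card_range, nsmul_eq_mul]
        have := Hhedge
        rw [← e] at this
        rw [e2] at this
        linarith
      have hηr : η * r = ε / 2 := by
        rw [hηdef]
        field_simp
      have hTbound : ∑ t ∈ Finset.range T, Bnd t ≤ ∑ t ∈ Finset.range T, ε := by
        rw [Finset.sum_const, Finset.card_range, nsmul_eq_mul]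
        rw [hηr] at hsum2
        have : (T:ℝ) * ε = T * (ε/2) + T * (ε/2) := by ring
        linarith [hkey]
      obtain ⟨t, ht, hBt⟩ := Finset.exists_le_of_sum_le
        ⟨0, Finset.mem_range.2 hTpos⟩ hTbound
      refine ⟨fun j => Stmt16Aux.ptf d k η (cum t) (Fin.castSucc j), ?_, ?_⟩
      · rw [hV]
        refine Finset.mem_biUnion.2 ⟨t, ht, ?_⟩
        refine Finset.mem_image.2 ⟨fun i : Fin t => σ i, Finset.mem_univ _, ?_⟩
        have hcsum : ∀ n, cum n = fun j => ∑ s ∈ Finset.range n, Stmt16Aux.vecC d m x (σ s) j := by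
          intro n
          induction n with
          | zero => rw [hc0]; funext j; simp
          | succ n ih =>
            rw [hcs n, ih]
            funext j
            rw [Finset.sum_range_succ]
        have harg : (fun j' => ∑ i : Fin t, Stmt16Aux.vecC d m x (σ i) j') = cum t := by
          funext j'
          rw [hcsum t]
          exact Fin.sum_univ_eq_sum_range (fun s => Stmt16Aux.vecC d m x (σ s) j') t
        show (fun j => Stmt16Aux.ptf d k η
            (fun j' => ∑ i : Fin t, Stmt16Aux.vecC d m x (σ i) j') (Fin.castSucc j)) = _
        rw [harg]
      · intro i
        rw [Stmt16Aux.loss_eq, Stmt16Aux.loss_eq]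
        have h := (hB t i).trans hBt
        have e : (r - min (∑ j, w j * x i j) r)
            - (r - min (∑ j, (fun j => Stmt16Aux.ptf d k η (cum t) (Fin.castSucc j)) j * x i j) r)
            = min (∑ j, Stmt16Aux.ptf d k η (cum t) (Fin.castSucc j) * x i j) r
              - min (∑ j, w j * x i j) r := by
          simp only []
          ring
        rw [e]
        exact h
    · -- cardinality bound
      have hcardC : Fintype.card (Option (Fin m × Bool)) = 2 * m + 1 := by
        simp [Fintype.card_option, Fintype.card_prod]
        omega
      have hcard : V.card ≤ (3*m)^T := by
        have geo : ∀ N : ℕ, ∑ n ∈ Finset.range N, (2*m+1)^n ≤ (2*m+1)^N := by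
          intro N
          induction N with
          | zero => simp
          | succ N ih =>
            rw [Finset.sum_range_succ]
            calc (∑ n ∈ Finset.range N, (2*m+1)^n) + (2*m+1)^N
                ≤ (2*m+1)^N + (2*m+1)^N := Nat.add_le_add_right ih _
              _ = 2 * (2*m+1)^N := by ring
              _ ≤ (2*m+1) * (2*m+1)^N := Nat.mul_le_mul_right _ (by omega)
              _ = (2*m+1)^(N+1) := by rw [pow_succ]; ring
        calc V.card ≤ ∑ n ∈ Finset.range T, (Finset.image (F n) Finset.univ).card :=
              Finset.card_biUnion_le
          _ ≤ ∑ n ∈ Finset.range T, (2*m+1)^n := by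
              refine Finset.sum_le_sum fun n _ => ?_
              calc (Finset.image (F n) Finset.univ).card
                  ≤ (Finset.univ : Finset (Fin n → Option (Fin m × Bool))).card :=
                    Finset.card_image_le
                _ = (2*m+1)^n := by
                    rw [Finset.card_univ, Fintype.card_fun, hcardC, Fintype.card_fin]
          _ ≤ (2*m+1)^T := geo T
          _ ≤ (3*m)^T := Nat.pow_le_pow_left (by omega) T
      rcases Nat.eq_zero_or_pos V.card with h0 | hpos
      · rw [h0]
        simpa using hRHS_nn
      · have h1 : Real.log V.card ≤ Real.log (((3*m)^T : ℕ) : ℝ) :=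
          Real.log_le_log (by exact_mod_cast hpos) (by exact_mod_cast hcard)
        have h2 : Real.log (((3*m)^T : ℕ) : ℝ) = T * Real.log (3 * (m:ℝ)) := by
          rw [Nat.cast_pow, Real.log_pow]
          push_cast
          ring
        have h3 : (T:ℝ) * Real.log (3 * (m:ℝ)) ≤ X * Real.log (3 * (m:ℝ)) :=
          mul_le_mul_of_nonneg_right hTX hlog3m_nn
        have h4 : X * Real.log (3 * (m:ℝ))
            = 16 * r * k * Real.log d * Real.log (3 * m) / ε ^ 2 := by
          rw [hXdef]
          ring
        calc Real.log V.card ≤ Real.log (((3*m)^T : ℕ) : ℝ) := h1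
          _ = T * Real.log (3 * (m:ℝ)) := h2
          _ ≤ X * Real.log (3 * (m:ℝ)) := h3
          _ = _ := h4
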